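/- Let C, R be real constants with 4C² > R² and 2C + R cos(rQ) ≠ 0 for all r, where Q = √(4C² - R²). Then the functions α(r) = Q²/(2C + R cos(rQ)) and l(r) = QR sin(rQ)/(2C + R cos(rQ)) satisfy l' = -α² + 2Cα and α' = αl, and both α and l are periodic with period 2π/Q. -/

import Mathlib

theorem cy_soliton_Q_neg (C R : ℝ) (hR : 4*C^2 > R^2)
    (Q : ℝ) (hQ : Q = Real.sqrt (4*C^2 - R^2))
    (hden : ∀ r : ℝ, 2*C + R*Real.cos (r*Q) ≠ 0) :
    let α : ℝ → ℝ := fun r => Q^2/(2*C + R*Real.cos (r*Q))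
    let l : ℝ → ℝ := fun r => Q*R*Real.sin (r*Q)/(2*C + R*Real.cos (r*Q))
    (∀ r, deriv l r = -(α r)^2 + 2*C*(α r)) ∧
    (∀ r, deriv α r = α r * l r) ∧
    Function.Periodic α (2*Real.pi/Q) ∧ Function.Periodic l (2*Real.pi/Q) := by
  intro α l
  have hQ2 : Q^2 = 4*C^2 - R^2 := by
    rw [hQ, Real.sq_sqrt (by linarith)]
  have hQpos : 0 < Q := by
    rw [hQ]; exact Real.sqrt_pos.mpr (by linarith)
  have hd : ∀ r : ℝ, HasDerivAt (fun r => 2*C + R*Real.cos (r*Q))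
      (R * (-Real.sin (r*Q) * Q)) r := by
    intro r
    simpa using (((Real.hasDerivAt_cos (r*Q)).comp r
      ((hasDerivAt_id r).mul_const Q)).const_mul R).const_add (2*C)
  have hnum : ∀ r : ℝ, HasDerivAt (fun r => Q*R*Real.sin (r*Q))
      (Q*R * (Real.cos (r*Q) * Q)) r := by
    intro r
    simpa using ((Real.hasDerivAt_sin (r*Q)).comp r
      ((hasDerivAt_id r).mul_const Q)).const_mul (Q*R)
  have hαd : ∀ r : ℝ, HasDerivAt α
      ((0 * (2*C + R*Real.cos (r*Q)) - Q^2 * (R * (-Real.sin (r*Q) * Q))) /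
        (2*C + R*Real.cos (r*Q))^2) r := by
    intro r
    exact (hasDerivAt_const r (Q^2)).div (hd r) (hden r)
  have hld : ∀ r : ℝ, HasDerivAt l
      ((Q*R * (Real.cos (r*Q) * Q) * (2*C + R*Real.cos (r*Q)) -
        Q*R*Real.sin (r*Q) * (R * (-Real.sin (r*Q) * Q))) /
        (2*C + R*Real.cos (r*Q))^2) r := by
    intro r
    exact (hnum r).div (hd r) (hden r)
  refine ⟨?_, ?_, ?_, ?_⟩
  · intro r
    rw [(hld r).deriv]
    have h := hden r
    have hpyth := Real.sin_sq_add_cos_sq (r*Q)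
    show _ = -(Q^2/(2*C + R*Real.cos (r*Q)))^2 + 2*C*(Q^2/(2*C + R*Real.cos (r*Q)))
    generalize Real.cos (r*Q) = c at h hpyth ⊢
    generalize Real.sin (r*Q) = s at h hpyth ⊢
    rw [div_eq_iff (pow_ne_zero 2 h)]
    have e : Q^2/(2*C + R*c) * (2*C + R*c) = Q^2 := div_mul_cancel₀ _ h
    linear_combination Q^2*R^2 * hpyth + Q^2 * hQ2 -
      (-(Q^2/(2*C + R*c) * (2*C + R*c) + Q^2) + 2*C*(2*C + R*c)) * e
  · intro r
    rw [(hαd r).deriv]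
    show _ = (Q^2/(2*C + R*Real.cos (r*Q))) * (Q*R*Real.sin (r*Q)/(2*C + R*Real.cos (r*Q)))
    have h := hden r
    field_simp
    ring
  · intro r
    show Q^2/(2*C + R*Real.cos ((r + 2*Real.pi/Q)*Q)) = _
    rw [add_mul, div_mul_cancel₀ _ hQpos.ne', Real.cos_add_two_pi]
  · intro r
    show Q*R*Real.sin ((r + 2*Real.pi/Q)*Q)/(2*C + R*Real.cos ((r + 2*Real.pi/Q)*Q)) = _
    rw [add_mul, div_mul_cancel₀ _ hQpos.ne', Real.cos_add_two_pi, Real.sin_add_two_pi]
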